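/- For any non-negative random variable X and any s₁ < s₂ ≤ 1/2 (with finite moments), h(s₁) ≥ h(s₂) where h(s) = E[X^{-s}]·E[X^{s-1}]; i.e., h is nonincreasing on (−∞, 1/2] and nondecreasing on [1/2, ∞). -/

import Mathlib

open MeasureTheory Real Set

section Aux

variable {Ω : Type*} [MeasurableSpace Ω] {μ : Measure Ω} [IsProbabilityMeasure μ]
  {X : Ω → ℝ}

lemma aux_aemeas (hint : ∀ s : ℝ, Integrable (fun ω => X ω ^ (-s)) μ ∧
      Integrable (fun ω => X ω ^ (s - 1)) μ) (s : ℝ) :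
    AEMeasurable (fun ω => ENNReal.ofReal (X ω ^ (-s))) μ :=
  ENNReal.measurable_ofReal.comp_aemeasurable (hint s).1.aemeasurable

lemma aux_ne_top (hXpos : ∀ ω, 0 < X ω)
    (hint : ∀ s : ℝ, Integrable (fun ω => X ω ^ (-s)) μ ∧
      Integrable (fun ω => X ω ^ (s - 1)) μ) (s : ℝ) :
    (∫⁻ ω, ENNReal.ofReal (X ω ^ (-s)) ∂μ) ≠ ⊤ := by
  have h0 : (0 : Ω → ℝ) ≤ᵐ[μ] fun ω => X ω ^ (-s) :=
    Filter.Eventually.of_forall fun ω => rpow_nonneg (hXpos ω).le _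
  exact ((hasFiniteIntegral_iff_ofReal h0).mp (hint s).1.hasFiniteIntegral).ne

lemma aux_ne_zero (hXpos : ∀ ω, 0 < X ω)
    (hint : ∀ s : ℝ, Integrable (fun ω => X ω ^ (-s)) μ ∧
      Integrable (fun ω => X ω ^ (s - 1)) μ) (s : ℝ) :
    (∫⁻ ω, ENNReal.ofReal (X ω ^ (-s)) ∂μ) ≠ 0 := by
  intro h
  rw [lintegral_eq_zero_iff' (aux_aemeas hint s)] at h
  have h1 : (Filter.Eventually (fun ω => ENNReal.ofReal (X ω ^ (-s)) = 0) (ae μ)) := h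
  have h2 : ∀ ω, ¬ (ENNReal.ofReal (X ω ^ (-s)) = 0) := by
    intro ω
    simp only [ENNReal.ofReal_eq_zero, not_le]
    exact rpow_pos_of_pos (hXpos ω) _
  have := h1.exists
  rcases this with ⟨ω, hω⟩
  exact h2 ω hω

lemma aux_int_eq (hXpos : ∀ ω, 0 < X ω)
    (hint : ∀ s : ℝ, Integrable (fun ω => X ω ^ (-s)) μ ∧
      Integrable (fun ω => X ω ^ (s - 1)) μ) (s : ℝ) :
    ∫ ω, X ω ^ (-s) ∂μ = (∫⁻ ω, ENNReal.ofReal (X ω ^ (-s)) ∂μ).toReal :=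
  integral_eq_lintegral_of_nonneg_ae
    (Filter.Eventually.of_forall fun ω => rpow_nonneg (hXpos ω).le _)
    (hint s).1.aestronglyMeasurable

/-- Log-convexity of `s ↦ ∫⁻ X^(-s)` via Hölder. -/
lemma aux_logconvex (hXpos : ∀ ω, 0 < X ω)
    (hint : ∀ s : ℝ, Integrable (fun ω => X ω ^ (-s)) μ ∧
      Integrable (fun ω => X ω ^ (s - 1)) μ)
    (a b l : ℝ) (hl0 : 0 < l) (hl1 : l < 1) :
    (∫⁻ ω, ENNReal.ofReal (X ω ^ (-(l * a + (1 - l) * b))) ∂μ) ≤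
      (∫⁻ ω, ENNReal.ofReal (X ω ^ (-a)) ∂μ) ^ l *
      (∫⁻ ω, ENNReal.ofReal (X ω ^ (-b)) ∂μ) ^ (1 - l) := by
  set p : ℝ := 1 / l with hp
  set q : ℝ := 1 / (1 - l) with hq
  have hl1' : 0 < 1 - l := by linarith
  have hpq : p.HolderConjugate q := by
    rw [Real.holderConjugate_iff]
    constructor
    · rw [hp]; rw [lt_div_iff₀ hl0]; linarith
    · rw [hp, hq, one_div, one_div, inv_inv, inv_inv]; ring
  have key := ENNReal.lintegral_mul_le_Lp_mul_Lq μ hpq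
    (aux_aemeas hint (l * a)) (aux_aemeas hint ((1 - l) * b))
  have h1 : ∀ ω, (fun ω => ENNReal.ofReal (X ω ^ (-(l * a)))) ω *
      (fun ω => ENNReal.ofReal (X ω ^ (-((1 - l) * b)))) ω
      = ENNReal.ofReal (X ω ^ (-(l * a + (1 - l) * b))) := by
    intro ω
    simp only
    rw [← ENNReal.ofReal_mul (rpow_nonneg (hXpos ω).le _),
      ← Real.rpow_add (hXpos ω)]
    ring_nf
  have h2 : ∀ ω, (ENNReal.ofReal (X ω ^ (-(l * a)))) ^ p
      = ENNReal.ofReal (X ω ^ (-a)) := by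
    intro ω
    have ep : -(l * a) * p = -a := by
      rw [hp]; field_simp; try ring
    rw [ENNReal.ofReal_rpow_of_nonneg (rpow_nonneg (hXpos ω).le _) (by positivity),
      ← Real.rpow_mul (hXpos ω).le, ep]
  have h3 : ∀ ω, (ENNReal.ofReal (X ω ^ (-((1 - l) * b)))) ^ q
      = ENNReal.ofReal (X ω ^ (-b)) := by
    intro ω
    have eq' : -((1 - l) * b) * q = -b := by
      rw [hq]; field_simp; try ring
    rw [ENNReal.ofReal_rpow_of_nonneg (rpow_nonneg (hXpos ω).le _) (by positivity),
      ← Real.rpow_mul (hXpos ω).le, eq']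
  calc (∫⁻ ω, ENNReal.ofReal (X ω ^ (-(l * a + (1 - l) * b))) ∂μ)
      = ∫⁻ ω, ((fun ω => ENNReal.ofReal (X ω ^ (-(l * a)))) *
        (fun ω => ENNReal.ofReal (X ω ^ (-((1 - l) * b))))) ω ∂μ := by
        refine lintegral_congr fun ω => (h1 ω).symm
    _ ≤ (∫⁻ ω, ENNReal.ofReal (X ω ^ (-(l * a))) ^ p ∂μ) ^ (1 / p) *
        (∫⁻ ω, ENNReal.ofReal (X ω ^ (-((1 - l) * b))) ^ q ∂μ) ^ (1 / q) := key
    _ = (∫⁻ ω, ENNReal.ofReal (X ω ^ (-a)) ∂μ) ^ l *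
        (∫⁻ ω, ENNReal.ofReal (X ω ^ (-b)) ∂μ) ^ (1 - l) := by
        rw [lintegral_congr fun ω => h2 ω, lintegral_congr fun ω => h3 ω]
        congr 1 <;> congr 1
        · rw [hp]; field_simp; try ring
        · rw [hq]; field_simp

/-- Key monotonicity in `ℝ≥0∞`. -/
lemma aux_key (hXpos : ∀ ω, 0 < X ω)
    (hint : ∀ s : ℝ, Integrable (fun ω => X ω ^ (-s)) μ ∧
      Integrable (fun ω => X ω ^ (s - 1)) μ)
    {s₁ s₂ : ℝ} (h12 : s₁ ≤ s₂) (h2 : s₂ ≤ 1/2) :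
    (∫⁻ ω, ENNReal.ofReal (X ω ^ (-s₂)) ∂μ) *
      (∫⁻ ω, ENNReal.ofReal (X ω ^ (-(1 - s₂))) ∂μ) ≤
    (∫⁻ ω, ENNReal.ofReal (X ω ^ (-s₁)) ∂μ) *
      (∫⁻ ω, ENNReal.ofReal (X ω ^ (-(1 - s₁))) ∂μ) := by
  rcases eq_or_lt_of_le h12 with rfl | hlt
  · exact le_rfl
  · set F : ℝ → ENNReal := fun s => ∫⁻ ω, ENNReal.ofReal (X ω ^ (-s)) ∂μ with hF
    have hden : (0:ℝ) < 1 - 2*s₁ := by linarith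
    set l : ℝ := (1 - s₁ - s₂) / (1 - 2*s₁) with hl
    have hl0 : 0 < l := div_pos (by linarith) hden
    have hl1 : l < 1 := by
      rw [hl, div_lt_one hden]; linarith
    have e1 : l * s₁ + (1 - l) * (1 - s₁) = s₂ := by
      rw [hl, div_eq_mul_inv]
      linear_combination (-(1 - s₁ - s₂)) * mul_inv_cancel₀ hden.ne'
    have e2 : (1 - l) * s₁ + l * (1 - s₁) = 1 - s₂ := by
      rw [hl, div_eq_mul_inv]
      linear_combination (1 - s₁ - s₂) * mul_inv_cancel₀ hden.ne'
    have c1 : F s₂ ≤ F s₁ ^ l * F (1 - s₁) ^ (1 - l) := by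
      rw [← e1]; exact aux_logconvex hXpos hint s₁ (1 - s₁) l hl0 hl1
    have c2 : F (1 - s₂) ≤ F s₁ ^ (1 - l) * F (1 - s₁) ^ l := by
      have e2' : (1 - l) * s₁ + (1 - (1 - l)) * (1 - s₁) = 1 - s₂ := by
        rw [hl, div_eq_mul_inv]
        linear_combination (1 - s₁ - s₂) * mul_inv_cancel₀ hden.ne'
      have h := aux_logconvex hXpos hint s₁ (1 - s₁) (1 - l) (by linarith) (by linarith)
      rw [e2', show (1:ℝ) - (1 - l) = l by ring] at h
      exact h
    calc F s₂ * F (1 - s₂) ≤ (F s₁ ^ l * F (1 - s₁) ^ (1 - l)) *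
          (F s₁ ^ (1 - l) * F (1 - s₁) ^ l) := mul_le_mul' c1 c2
      _ = (F s₁ ^ l * F s₁ ^ (1 - l)) * (F (1 - s₁) ^ (1 - l) * F (1 - s₁) ^ l) := by ring
      _ = F s₁ * F (1 - s₁) := by
          rw [← ENNReal.rpow_add _ _ (aux_ne_zero hXpos hint s₁) (aux_ne_top hXpos hint s₁),
            ← ENNReal.rpow_add _ _ (aux_ne_zero hXpos hint (1 - s₁)) (aux_ne_top hXpos hint (1 - s₁))]
          rw [show l + (1 - l) = (1:ℝ) by ring, show (1 - l) + l = (1:ℝ) by ring, ENNReal.rpow_one, ENNReal.rpow_one]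

end Aux

/-- `h(s) = E[X^{-s}] E[X^{s-1}]` is nonincreasing on `(-∞, 1/2]` and nondecreasing on
`[1/2, ∞)`; in particular `s₁ < s₂ ≤ 1/2` implies `h(s₁) ≥ h(s₂)`. -/
theorem statement11 {Ω : Type*} [MeasurableSpace Ω] (μ : Measure Ω) [IsProbabilityMeasure μ]
    (X : Ω → ℝ) (hXpos : ∀ ω, 0 < X ω)
    (hint : ∀ s : ℝ, Integrable (fun ω => X ω ^ (-s)) μ ∧
      Integrable (fun ω => X ω ^ (s - 1)) μ) :
    AntitoneOn (fun s : ℝ => (∫ ω, X ω ^ (-s) ∂μ) * ∫ ω, X ω ^ (s - 1) ∂μ)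
      (Set.Iic (1/2 : ℝ)) ∧
    MonotoneOn (fun s : ℝ => (∫ ω, X ω ^ (-s) ∂μ) * ∫ ω, X ω ^ (s - 1) ∂μ)
      (Set.Ici (1/2 : ℝ)) := by
  set F : ℝ → ENNReal := fun s => ∫⁻ ω, ENNReal.ofReal (X ω ^ (-s)) ∂μ with hF
  have hrepr : ∀ s : ℝ, (∫ ω, X ω ^ (-s) ∂μ) * ∫ ω, X ω ^ (s - 1) ∂μ
      = (F s * F (1 - s)).toReal := by
    intro s
    have h2 : (fun ω => X ω ^ (s - 1)) = fun ω => X ω ^ (-(1 - s)) := by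
      funext ω; congr 1; ring
    rw [aux_int_eq hXpos hint s, h2, aux_int_eq hXpos hint (1 - s), ENNReal.toReal_mul]
  have hanti : AntitoneOn (fun s : ℝ => (∫ ω, X ω ^ (-s) ∂μ) * ∫ ω, X ω ^ (s - 1) ∂μ)
      (Set.Iic (1/2 : ℝ)) := by
    intro s₁ hs₁ s₂ hs₂ h12
    simp only
    rw [hrepr s₁, hrepr s₂]
    refine ENNReal.toReal_mono ?_ (aux_key hXpos hint h12 hs₂)
    exact ENNReal.mul_ne_top (aux_ne_top hXpos hint s₁) (aux_ne_top hXpos hint (1 - s₁))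
  refine ⟨hanti, ?_⟩
  intro s₁ hs₁ s₂ hs₂ h12
  have hsymm : ∀ s : ℝ, (∫ ω, X ω ^ (-s) ∂μ) * ∫ ω, X ω ^ (s - 1) ∂μ
      = (∫ ω, X ω ^ (-(1 - s)) ∂μ) * ∫ ω, X ω ^ ((1 - s) - 1) ∂μ := by
    intro s
    have e1 : ∀ ω : Ω, X ω ^ (-s) = X ω ^ ((1 - s) - 1) := by
      intro ω; congr 1; ring
    have e2 : ∀ ω : Ω, X ω ^ (s - 1) = X ω ^ (-(1 - s)) := by
      intro ω; congr 1; ring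
    rw [integral_congr_ae (Filter.Eventually.of_forall e1),
      integral_congr_ae (Filter.Eventually.of_forall e2)]
    ring
  simp only
  rw [hsymm s₁, hsymm s₂]
  exact hanti (by simp at hs₂ ⊢; linarith) (by simp at hs₁ ⊢; linarith) (by linarith)
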